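/- Let Z(x₁,x₂,x₃) = e^{x₃}·(x₁, x₂, 1−max(|x₁|,|x₂|)). Then there exist constants 0 < α₁ ≤ α₂ such that at every point x = (x₁,x₂,x₃) with max(|x₁|,|x₂|) < 1 and |x₁| ≠ |x₂|, the map Z is differentiable and α₁ ≤ |Z(x)|/‖DZ(x)‖ and |Z(x)|/ℓ(DZ(x)) ≤ α₂. -/
import Mathlib


/-- The Nicks–Sixsmith (pyramid-type) Zorich map on the fundamental beam:
`Z(x₁,x₂,x₃) = e^{x₃}·(x₁, x₂, 1 − max(|x₁|,|x₂|))`. -/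
noncomputable def Zmap (x : EuclideanSpace ℝ (Fin 3)) : EuclideanSpace ℝ (Fin 3) :=
  (WithLp.equiv 2 (Fin 3 → ℝ)).symm
    ![Real.exp (x 2) * x 0, Real.exp (x 2) * x 1,
      Real.exp (x 2) * (1 - max |x 0| |x 1|)]

/-- `ℓ(L) = inf_{|h|=1} |L h|`, the minimal stretching of a linear map `L : ℝ³ → ℝ³`. -/
noncomputable def ell (L : EuclideanSpace ℝ (Fin 3) →L[ℝ] EuclideanSpace ℝ (Fin 3)) : ℝ :=
  ⨅ h : Metric.sphere (0 : EuclideanSpace ℝ (Fin 3)) 1, ‖L (h : EuclideanSpace ℝ (Fin 3))‖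


noncomputable section ZmapAux

abbrev EE := EuclideanSpace ℝ (Fin 3)

def Wfun (u v : ℝ) (y : EE) : EE :=
  (WithLp.equiv 2 (Fin 3 → ℝ)).symm
    ![Real.exp (y 2) * y 0, Real.exp (y 2) * y 1,
      Real.exp (y 2) * (1 - (u * y 0 + v * y 1))]

def Lmap (u v : ℝ) (x : EE) : EE →L[ℝ] EE :=
  ((EuclideanSpace.equiv (Fin 3) ℝ).symm : (Fin 3 → ℝ) ≃L[ℝ] EE).toContinuousLinearMap.comp
    (ContinuousLinearMap.pi
      ![Real.exp (x 2) • (EuclideanSpace.proj (0:Fin 3) + x 0 • EuclideanSpace.proj (2:Fin 3)),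
        Real.exp (x 2) • (EuclideanSpace.proj (1:Fin 3) + x 1 • EuclideanSpace.proj (2:Fin 3)),
        Real.exp (x 2) • ((1 - (u * x 0 + v * x 1)) • EuclideanSpace.proj (2:Fin 3)
          - u • EuclideanSpace.proj (0:Fin 3) - v • EuclideanSpace.proj (1:Fin 3))])

lemma Lmap_apply0 (u v : ℝ) (x h : EE) :
    (Lmap u v x h) 0 = Real.exp (x 2) * (h 0 + x 0 * h 2) := by simp [Lmap]; ring
lemma Lmap_apply1 (u v : ℝ) (x h : EE) :
    (Lmap u v x h) 1 = Real.exp (x 2) * (h 1 + x 1 * h 2) := by simp [Lmap]; ring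
lemma Lmap_apply2 (u v : ℝ) (x h : EE) :
    (Lmap u v x h) 2 = Real.exp (x 2) * ((1 - (u * x 0 + v * x 1)) * h 2 - u * h 0 - v * h 1) := by
  simp [Lmap]

lemma Wfun_hasFDerivAt (u v : ℝ) (x : EE) : HasFDerivAt (Wfun u v) (Lmap u v x) x := by
  have hproj : ∀ i : Fin 3,
      HasFDerivAt (fun y : EE => y i) (EuclideanSpace.proj i : EE →L[ℝ] ℝ) x := by
    intro i
    exact ContinuousLinearMap.hasFDerivAt (𝕜 := ℝ) (E := EE) (F := ℝ) (EuclideanSpace.proj i)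
  have hexp : HasFDerivAt (fun y : EE => Real.exp (y 2))
      (Real.exp (x 2) • EuclideanSpace.proj (2:Fin 3) : EE →L[ℝ] ℝ) x := (hproj 2).exp
  have hF : HasFDerivAt
      (fun y : EE => (![Real.exp (y 2) * y 0, Real.exp (y 2) * y 1,
          Real.exp (y 2) * (1 - (u * y 0 + v * y 1))] : Fin 3 → ℝ))
      ((ContinuousLinearMap.pi
        ![Real.exp (x 2) • (EuclideanSpace.proj (0:Fin 3) + x 0 • EuclideanSpace.proj (2:Fin 3)),
          Real.exp (x 2) • (EuclideanSpace.proj (1:Fin 3) + x 1 • EuclideanSpace.proj (2:Fin 3)),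
          Real.exp (x 2) • ((1 - (u * x 0 + v * x 1)) • EuclideanSpace.proj (2:Fin 3)
            - u • EuclideanSpace.proj (0:Fin 3) - v • EuclideanSpace.proj (1:Fin 3))]) :
        EE →L[ℝ] (Fin 3 → ℝ)) x := by
    rw [hasFDerivAt_pi']
    intro i
    fin_cases i
    · have := hexp.mul (hproj 0)
      refine this.congr_fderiv ?_
      ext h
      simp
      ring
    · have := hexp.mul (hproj 1)
      refine this.congr_fderiv ?_
      ext h
      simp
      ring
    · have hin : HasFDerivAt (fun y : EE => 1 - (u * y 0 + v * y 1))
          (-(u • EuclideanSpace.proj (0:Fin 3)) - v • EuclideanSpace.proj (1:Fin 3) :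
            EE →L[ℝ] ℝ) x := by
        have := (((hproj 0).const_mul u).add ((hproj 1).const_mul v)).const_sub 1
        refine this.congr_fderiv ?_
        ext h; simp; ring
      have := hexp.mul hin
      refine this.congr_fderiv ?_
      ext h
      simp
      ring
  exact (((EuclideanSpace.equiv (Fin 3) ℝ).symm :
    (Fin 3 → ℝ) ≃L[ℝ] EE).toContinuousLinearMap.hasFDerivAt.comp x hF)

lemma enorm_eq (h : EE) : ‖h‖ = Real.sqrt (h 0 ^ 2 + h 1 ^ 2 + h 2 ^ 2) := by
  rw [EuclideanSpace.norm_eq]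
  congr 1
  simp [Fin.sum_univ_three, Real.norm_eq_abs, sq_abs]

lemma enorm_sq (h : EE) : ‖h‖ ^ 2 = h 0 ^ 2 + h 1 ^ 2 + h 2 ^ 2 := by
  rw [enorm_eq, Real.sq_sqrt (by positivity)]

/-- generic quadratic upper bound -/
lemma quad_upper (u v a b h0 h1 h2 : ℝ) (hu : u^2 ≤ 1) (hv : v^2 ≤ 1)
    (ha : a^2 ≤ 1) (hb : b^2 ≤ 1) (hw : (1 - (u*a + v*b))^2 ≤ 1) :
    (h0 + a*h2)^2 + (h1 + b*h2)^2 + ((1 - (u*a + v*b))*h2 - u*h0 - v*h1)^2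
      ≤ 9 * (h0^2 + h1^2 + h2^2) := by
  obtain ⟨w, hwdef⟩ : ∃ t, t = 1 - (u*a + v*b) := ⟨_, rfl⟩
  rw [← hwdef] at hw ⊢
  have b0 : (h0 + a*h2)^2 ≤ 2*h0^2 + 2*h2^2 := by
    nlinarith [sq_nonneg (h0 - a*h2), mul_nonneg (sub_nonneg.2 ha) (sq_nonneg h2)]
  have b1 : (h1 + b*h2)^2 ≤ 2*h1^2 + 2*h2^2 := by
    nlinarith [sq_nonneg (h1 - b*h2), mul_nonneg (sub_nonneg.2 hb) (sq_nonneg h2)]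
  have b2 : (w*h2 - u*h0 - v*h1)^2 ≤ 3*(h0^2 + h1^2 + h2^2) := by
    nlinarith [sq_nonneg (w*h2 + u*h0), sq_nonneg (w*h2 + v*h1), sq_nonneg (u*h0 + v*h1),
      mul_nonneg (sub_nonneg.2 hu) (sq_nonneg h0),
      mul_nonneg (sub_nonneg.2 hv) (sq_nonneg h1),
      mul_nonneg (sub_nonneg.2 hw) (sq_nonneg h2)]
  linarith [sq_nonneg h0, sq_nonneg h1, sq_nonneg h2]

/-- generic quadratic lower bound -/
lemma quad_lower (u v a b h0 h1 h2 : ℝ) (hu : u^2 ≤ 1) (hv : v^2 ≤ 1)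
    (ha : a^2 ≤ 1) (hb : b^2 ≤ 1) (hw : (1 - (u*a + v*b))^2 ≤ 1) :
    h0^2 + h1^2 + h2^2
      ≤ 25 * ((h0 + a*h2)^2 + (h1 + b*h2)^2
          + ((1 - (u*a + v*b))*h2 - u*h0 - v*h1)^2) := by
  obtain ⟨w, hwdef⟩ : ∃ t, t = 1 - (u*a + v*b) := ⟨_, rfl⟩
  rw [← hwdef] at hw ⊢
  obtain ⟨T0, hT0⟩ : ∃ t, t = h0 + a*h2 := ⟨_, rfl⟩
  obtain ⟨T1, hT1⟩ : ∃ t, t = h1 + b*h2 := ⟨_, rfl⟩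
  obtain ⟨T2, hT2⟩ : ∃ t, t = w*h2 - u*h0 - v*h1 := ⟨_, rfl⟩
  rw [← hT0, ← hT1, ← hT2]
  have e2' : h2^2 = (u*T0 + v*T1 + T2)^2 := by
    rw [hT0, hT1, hT2, hwdef]; ring
  have b2 : h2^2 ≤ 3*(T0^2 + T1^2 + T2^2) := by
    nlinarith [e2', sq_nonneg (u*T0 - v*T1), sq_nonneg (u*T0 - T2), sq_nonneg (v*T1 - T2),
      mul_nonneg (sub_nonneg.2 hu) (sq_nonneg T0),
      mul_nonneg (sub_nonneg.2 hv) (sq_nonneg T1)]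
  have e0 : h0^2 = (T0 - a*h2)^2 := by rw [hT0]; ring
  have b0 : h0^2 ≤ 2*T0^2 + 2*h2^2 := by
    nlinarith [e0, sq_nonneg (T0 + a*h2), mul_nonneg (sub_nonneg.2 ha) (sq_nonneg h2)]
  have e1 : h1^2 = (T1 - b*h2)^2 := by rw [hT1]; ring
  have b1 : h1^2 ≤ 2*T1^2 + 2*h2^2 := by
    nlinarith [e1, sq_nonneg (T1 + b*h2), mul_nonneg (sub_nonneg.2 hb) (sq_nonneg h2)]
  linarith [sq_nonneg T0, sq_nonneg T1, sq_nonneg T2]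

lemma Zmap_apply0 (x : EE) : Zmap x 0 = Real.exp (x 2) * x 0 := by simp [Zmap]
lemma Zmap_apply1 (x : EE) : Zmap x 1 = Real.exp (x 2) * x 1 := by simp [Zmap]
lemma Zmap_apply2 (x : EE) :
    Zmap x 2 = Real.exp (x 2) * (1 - max |x 0| |x 1|) := by simp [Zmap]

end ZmapAux

section ZmapKey
set_option maxHeartbeats 1600000

lemma sq_le_one_of_abs_lt {a : ℝ} (h : |a| < 1) : a ^ 2 ≤ 1 := by
  nlinarith [abs_nonneg a, sq_abs a]

instance : Nonempty (Metric.sphere (0 : EE) 1) :=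
  ⟨⟨EuclideanSpace.single 0 1, by simp [EuclideanSpace.norm_single]⟩⟩

lemma Zmap_key (u v : ℝ) (x : EE) (hu : u ^ 2 ≤ 1) (hv : v ^ 2 ≤ 1)
    (hm : u * x 0 + v * x 1 = max |x 0| |x 1|)
    (hmax : max |x 0| |x 1| < 1)
    (heq : Zmap =ᶠ[nhds x] Wfun u v) :
    DifferentiableAt ℝ Zmap x ∧
      (1/6 : ℝ) ≤ ‖Zmap x‖ / ‖fderiv ℝ Zmap x‖ ∧
      ‖Zmap x‖ / ell (fderiv ℝ Zmap x) ≤ 10 := by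
  have hcpos : 0 < Real.exp (x 2) := Real.exp_pos _
  have hm0 : 0 ≤ max |x 0| |x 1| := le_trans (abs_nonneg _) (le_max_left _ _)
  have hx0 : (x 0) ^ 2 ≤ 1 :=
    sq_le_one_of_abs_lt (lt_of_le_of_lt (le_max_left _ _) hmax)
  have hx1 : (x 1) ^ 2 ≤ 1 :=
    sq_le_one_of_abs_lt (lt_of_le_of_lt (le_max_right _ _) hmax)
  have hwm : (1 - max |x 0| |x 1|) ^ 2 ≤ 1 := by nlinarith
  have hwsq : (1 - (u * x 0 + v * x 1)) ^ 2 ≤ 1 := by rw [hm]; exact hwm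
  -- derivative
  have hD : HasFDerivAt Zmap (Lmap u v x) x :=
    (Wfun_hasFDerivAt u v x).congr_of_eventuallyEq heq
  have hdiff : DifferentiableAt ℝ Zmap x := hD.differentiableAt
  have hfd : fderiv ℝ Zmap x = Lmap u v x := hD.fderiv
  -- norm of Z
  have hZ : ‖Zmap x‖ = Real.sqrt ((Real.exp (x 2) * x 0)^2 + (Real.exp (x 2) * x 1)^2
      + (Real.exp (x 2) * (1 - max |x 0| |x 1|))^2) := by
    rw [enorm_eq, Zmap_apply0, Zmap_apply1, Zmap_apply2]
  have hmsq : (max |x 0| |x 1|) ^ 2 ≤ (x 0)^2 + (x 1)^2 := by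
    rcases le_total |x 0| |x 1| with h | h
    · rw [max_eq_right h, sq_abs]; nlinarith [sq_nonneg (x 0)]
    · rw [max_eq_left h, sq_abs]; nlinarith [sq_nonneg (x 1)]
  have hZlow : Real.exp (x 2) / 2 ≤ ‖Zmap x‖ := by
    rw [hZ]
    rw [show Real.exp (x 2) / 2 = Real.sqrt ((Real.exp (x 2)/2)^2) from
      (Real.sqrt_sq (by positivity)).symm]
    apply Real.sqrt_le_sqrt
    nlinarith [mul_le_mul_of_nonneg_left hmsq (sq_nonneg (Real.exp (x 2))),
      mul_nonneg (sq_nonneg (Real.exp (x 2))) (sq_nonneg (2 * max |x 0| |x 1| - 1))]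
  have hZup : ‖Zmap x‖ ≤ 2 * Real.exp (x 2) := by
    rw [hZ]
    rw [show 2 * Real.exp (x 2) = Real.sqrt ((2 * Real.exp (x 2))^2) from
      (Real.sqrt_sq (by positivity)).symm]
    apply Real.sqrt_le_sqrt
    nlinarith [mul_le_mul_of_nonneg_left hx0 (sq_nonneg (Real.exp (x 2))),
      mul_le_mul_of_nonneg_left hx1 (sq_nonneg (Real.exp (x 2))),
      mul_le_mul_of_nonneg_left hwm (sq_nonneg (Real.exp (x 2)))]
  -- norm of L h, general formula
  have hLh : ∀ h : EE, ‖Lmap u v x h‖ =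
      Real.sqrt ((Real.exp (x 2) * (h 0 + x 0 * h 2))^2
        + (Real.exp (x 2) * (h 1 + x 1 * h 2))^2
        + (Real.exp (x 2) * ((1 - (u * x 0 + v * x 1)) * h 2 - u * h 0 - v * h 1))^2) := by
    intro h
    rw [enorm_eq, Lmap_apply0, Lmap_apply1, Lmap_apply2]
  -- operator norm upper bound
  have hLup : ‖Lmap u v x‖ ≤ 3 * Real.exp (x 2) := by
    apply ContinuousLinearMap.opNorm_le_bound _ (by positivity)
    intro h
    rw [hLh h]
    rw [show 3 * Real.exp (x 2) * ‖h‖ = Real.sqrt ((3 * Real.exp (x 2) * ‖h‖)^2) from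
      (Real.sqrt_sq (by positivity)).symm]
    apply Real.sqrt_le_sqrt
    have hq := quad_upper u v (x 0) (x 1) (h 0) (h 1) (h 2) hu hv hx0 hx1 hwsq
    rw [← enorm_sq h] at hq
    have := mul_le_mul_of_nonneg_left hq (sq_nonneg (Real.exp (x 2)))
    ring_nf at this ⊢
    linarith
  -- pointwise lower bound
  have hLlow : ∀ h : EE, Real.exp (x 2) * ‖h‖ ≤ 5 * ‖Lmap u v x h‖ := by
    intro h
    suffices hsuf : Real.exp (x 2) * ‖h‖ / 5 ≤ ‖Lmap u v x h‖ by linarith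
    rw [hLh h]
    rw [show Real.exp (x 2) * ‖h‖ / 5 = Real.sqrt ((Real.exp (x 2) * ‖h‖ / 5)^2) from
      (Real.sqrt_sq (by positivity)).symm]
    apply Real.sqrt_le_sqrt
    have hq := quad_lower u v (x 0) (x 1) (h 0) (h 1) (h 2) hu hv hx0 hx1 hwsq
    rw [← enorm_sq h] at hq
    have := mul_le_mul_of_nonneg_left hq (sq_nonneg (Real.exp (x 2)))
    ring_nf at this ⊢
    linarith
  -- ell lower bound
  have hell : Real.exp (x 2) / 5 ≤ ell (Lmap u v x) := by
    unfold ell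
    apply le_ciInf
    rintro ⟨h, hh⟩
    have hh1 : ‖h‖ = 1 := by rwa [mem_sphere_zero_iff_norm] at hh
    have h2 := hLlow h
    rw [hh1, mul_one] at h2
    simp only
    linarith
  have hellpos : 0 < ell (Lmap u v x) := lt_of_lt_of_le (by positivity) hell
  -- operator norm lower bound
  have hLpos : 0 < ‖Lmap u v x‖ := by
    have h1 : ‖(EuclideanSpace.single (0:Fin 3) (1:ℝ) : EE)‖ = 1 := by
      simp [EuclideanSpace.norm_single]
    have h2 := hLlow (EuclideanSpace.single (0:Fin 3) (1:ℝ))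
    have h3 := (Lmap u v x).le_opNorm (EuclideanSpace.single (0:Fin 3) (1:ℝ))
    rw [h1] at h2 h3
    nlinarith
  refine ⟨hdiff, ?_, ?_⟩
  · rw [hfd, le_div_iff₀ hLpos]
    nlinarith
  · rw [hfd, div_le_iff₀ hellpos]
    nlinarith

end ZmapKey

section ZmapMain

lemma coord_continuous (i : Fin 3) : Continuous fun y : EE => y i :=
  (EuclideanSpace.proj (𝕜 := ℝ) (ι := Fin 3) i).continuous

lemma eventually_eq_case0 (x : EE) (s : ℝ) (hs : s = 1 ∨ s = -1)
    (hlt : |x 1| < |x 0|) (hsx : 0 < s * x 0) :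
    Zmap =ᶠ[nhds x] Wfun s 0 := by
  have hopen : IsOpen {y : EE | |y 1| < |y 0| ∧ 0 < s * y 0} := by
    apply IsOpen.inter
    · exact isOpen_lt ((coord_continuous 1).abs) ((coord_continuous 0).abs)
    · exact isOpen_lt continuous_const (continuous_const.mul (coord_continuous 0))
  have hmem : x ∈ {y : EE | |y 1| < |y 0| ∧ 0 < s * y 0} := ⟨hlt, hsx⟩
  filter_upwards [hopen.mem_nhds hmem] with y hy
  have hsy : s * y 0 = |y 0| := by
    rcases hs with h | h <;> subst h
    · rw [one_mul] at hy ⊢; exact (abs_of_pos hy.2).symm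
    · rw [abs_of_neg (by linarith [hy.2])]; ring
  have hmaxy : max |y 0| |y 1| = s * y 0 + 0 * y 1 := by
    rw [max_eq_left hy.1.le, hsy]; ring
  unfold Zmap Wfun
  rw [hmaxy]

lemma eventually_eq_case1 (x : EE) (t : ℝ) (ht : t = 1 ∨ t = -1)
    (hlt : |x 0| < |x 1|) (htx : 0 < t * x 1) :
    Zmap =ᶠ[nhds x] Wfun 0 t := by
  have hopen : IsOpen {y : EE | |y 0| < |y 1| ∧ 0 < t * y 1} := by
    apply IsOpen.inter
    · exact isOpen_lt ((coord_continuous 0).abs) ((coord_continuous 1).abs)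
    · exact isOpen_lt continuous_const (continuous_const.mul (coord_continuous 1))
  have hmem : x ∈ {y : EE | |y 0| < |y 1| ∧ 0 < t * y 1} := ⟨hlt, htx⟩
  filter_upwards [hopen.mem_nhds hmem] with y hy
  have hty : t * y 1 = |y 1| := by
    rcases ht with h | h <;> subst h
    · rw [one_mul] at hy ⊢; exact (abs_of_pos hy.2).symm
    · rw [abs_of_neg (by linarith [hy.2])]; ring
  have hmaxy : max |y 0| |y 1| = 0 * y 0 + t * y 1 := by
    rw [max_eq_right hy.1.le, hty]; ring
  unfold Zmap Wfun
  rw [hmaxy]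

end ZmapMain

/-- There are constants `0 < α₁ ≤ α₂` such that at every point of the open fundamental
beam off the diagonals, `Z` is differentiable and
`α₁ ≤ |Z(x)|/‖DZ(x)‖` and `|Z(x)|/ℓ(DZ(x)) ≤ α₂`. -/
theorem Zmap_derivative_comparison : ∃ α₁ α₂ : ℝ, 0 < α₁ ∧ α₁ ≤ α₂ ∧
    ∀ x : EuclideanSpace ℝ (Fin 3), max |x 0| |x 1| < 1 → |x 0| ≠ |x 1| →
      DifferentiableAt ℝ Zmap x ∧
      α₁ ≤ ‖Zmap x‖ / ‖fderiv ℝ Zmap x‖ ∧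
      ‖Zmap x‖ / ell (fderiv ℝ Zmap x) ≤ α₂ := by
  refine ⟨1/6, 10, by norm_num, by norm_num, ?_⟩
  intro x hmax hne
  rcases hne.lt_or_gt with hlt | hlt
  · -- |x 0| < |x 1|
    set t : ℝ := if 0 ≤ x 1 then 1 else -1 with htdef
    have ht : t = 1 ∨ t = -1 := by
      rw [htdef]; split <;> simp
    have htx : t * x 1 = |x 1| := by
      rw [htdef]; split
      · rw [one_mul, abs_of_nonneg (by assumption)]
      · rw [abs_of_neg (by linarith [not_le.mp (by assumption)])]; ring
    have hx1pos : 0 < |x 1| := lt_of_le_of_lt (abs_nonneg _) hlt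
    have heq := eventually_eq_case1 x t ht hlt (by rw [htx]; exact hx1pos)
    have hm : 0 * x 0 + t * x 1 = max |x 0| |x 1| := by
      rw [max_eq_right hlt.le, htx]; ring
    have hu : (0:ℝ) ^ 2 ≤ 1 := by norm_num
    have hv : t ^ 2 ≤ 1 := by rcases ht with h | h <;> rw [h] <;> norm_num
    exact Zmap_key 0 t x hu hv hm hmax heq
  · -- |x 1| < |x 0|
    set s : ℝ := if 0 ≤ x 0 then 1 else -1 with hsdef
    have hs : s = 1 ∨ s = -1 := by
      rw [hsdef]; split <;> simp
    have hsx : s * x 0 = |x 0| := by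
      rw [hsdef]; split
      · rw [one_mul, abs_of_nonneg (by assumption)]
      · rw [abs_of_neg (by linarith [not_le.mp (by assumption)])]; ring
    have hx0pos : 0 < |x 0| := lt_of_le_of_lt (abs_nonneg _) hlt
    have heq := eventually_eq_case0 x s hs hlt (by rw [hsx]; exact hx0pos)
    have hm : s * x 0 + 0 * x 1 = max |x 0| |x 1| := by
      rw [max_eq_left hlt.le, hsx]; ring
    have hv : (0:ℝ) ^ 2 ≤ 1 := by norm_num
    have hu : s ^ 2 ≤ 1 := by rcases hs with h | h <;> rw [h] <;> norm_num
    exact Zmap_key s 0 x hu hv hm hmax heq
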